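/- The 3×3 matrices A = λI₃ + N₃ and B = μI₃ + N₃² commute, but there is no invertible matrix S such that both S⁻¹AS and S⁻¹BS are Jordan matrices. -/

import Mathlib

open Matrix

def IsJordanMatrix {d : ℕ} (M : Matrix (Fin d) (Fin d) ℂ) : Prop :=
  (∀ i j : Fin d, (j : ℕ) ≠ (i : ℕ) → (j : ℕ) ≠ (i : ℕ) + 1 → M i j = 0) ∧
  (∀ i j : Fin d, (j : ℕ) = (i : ℕ) + 1 → M i j = 0 ∨ (M i j = 1 ∧ M i i = M j j))

private lemma cube_zero (x y z : ℂ) (h1 : x+y+z = 0) (h2 : x^2+y^2+z^2 = 0)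
    (h3 : x^3+y^3+z^3 = 0) : x = 0 := by
  have e2 : x*y + y*z + z*x = 0 := by linear_combination (x+y+z)/2 * h1 - (1/2) * h2
  have e3 : x*y*z = 0 := by linear_combination (1/3)*h3 - (1/3)*(x^2+y^2+z^2-x*y-y*z-z*x)*h1
  have : x^3 = 0 := by linear_combination x^2*h1 - x*e2 + e3
  exact pow_eq_zero_iff (n := 3) (by norm_num) |>.mp this

theorem not_simultaneously_jordanizable (lam mu : ℂ)
    (N A B : Matrix (Fin 3) (Fin 3) ℂ)
    (hN : N = Matrix.of fun i j : Fin 3 => if (i : ℕ) + 1 = (j : ℕ) then (1 : ℂ) else 0)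
    (hA : A = lam • (1 : Matrix (Fin 3) (Fin 3) ℂ) + N)
    (hB : B = mu • (1 : Matrix (Fin 3) (Fin 3) ℂ) + N ^ 2) :
    A * B = B * A ∧
      ¬ ∃ S : Matrix (Fin 3) (Fin 3) ℂ, IsUnit S ∧
        IsJordanMatrix (S⁻¹ * A * S) ∧ IsJordanMatrix (S⁻¹ * B * S) := by
  constructor
  · subst hA hB
    ext i j
    fin_cases i <;> fin_cases j <;>
      simp [Matrix.mul_apply, Fin.sum_univ_three, hN, pow_two, Matrix.add_apply,
        Matrix.smul_apply, Matrix.one_apply, mul_comm]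
  rintro ⟨S, hS, hJA, hJB⟩
  have hdet : IsUnit S.det := (Matrix.isUnit_iff_isUnit_det S).mp hS
  have h1 : S * S⁻¹ = 1 := Matrix.mul_nonsing_inv S hdet
  have h2 : S⁻¹ * S = 1 := Matrix.nonsing_inv_mul S hdet
  set J := S⁻¹ * A * S with hJ
  set K := S⁻¹ * B * S with hK
  have trJ : Matrix.trace J = Matrix.trace A := by
    rw [hJ, Matrix.trace_mul_comm, ← Matrix.mul_assoc, h1, Matrix.one_mul]
  have hJ2 : J * J = S⁻¹ * (A * A) * S := by
    rw [hJ]; rw [show S⁻¹ * A * S * (S⁻¹ * A * S) = S⁻¹ * A * (S * S⁻¹) * A * S by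
      simp only [Matrix.mul_assoc], h1]
    simp only [Matrix.mul_assoc, Matrix.mul_one, Matrix.one_mul]
  have trJ2 : Matrix.trace (J * J) = Matrix.trace (A * A) := by
    rw [hJ2, Matrix.trace_mul_comm, ← Matrix.mul_assoc, h1, Matrix.one_mul]
  have hJ3 : J * J * J = S⁻¹ * (A * A * A) * S := by
    rw [hJ2, hJ]
    rw [show S⁻¹ * (A * A) * S * (S⁻¹ * A * S) = S⁻¹ * (A * A) * (S * S⁻¹) * A * S by
      simp only [Matrix.mul_assoc], h1]
    simp only [Matrix.mul_assoc, Matrix.mul_one, Matrix.one_mul]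
  have trJ3 : Matrix.trace (J * J * J) = Matrix.trace (A * A * A) := by
    rw [hJ3, Matrix.trace_mul_comm, ← Matrix.mul_assoc, h1, Matrix.one_mul]
  have hNe : ∀ i j : Fin 3, N i j = if (i : ℕ) + 1 = (j : ℕ) then (1 : ℂ) else 0 := by
    intro i j; rw [hN]; rfl
  have hAe : ∀ i j : Fin 3, A i j = (if i = j then lam else 0) +
      (if (i : ℕ) + 1 = (j : ℕ) then (1 : ℂ) else 0) := by
    intro i j
    rw [hA]
    simp [Matrix.add_apply, Matrix.smul_apply, Matrix.one_apply, hNe]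
  have trA : Matrix.trace A = 3 * lam := by
    rw [Matrix.trace_fin_three, hAe, hAe, hAe]; norm_num; ring
  have trA2 : Matrix.trace (A * A) = 3 * lam ^ 2 := by
    rw [Matrix.trace_fin_three]
    simp only [Matrix.mul_apply, Fin.sum_univ_three, hAe]
    norm_num [Fin.ext_iff]; ring
  have trA3 : Matrix.trace (A * A * A) = 3 * lam ^ 3 := by
    rw [Matrix.trace_fin_three]
    simp only [Matrix.mul_apply, Fin.sum_univ_three, hAe]
    norm_num [Fin.ext_iff]; ring
  have z10 : J 1 0 = 0 := hJA.1 1 0 (by norm_num) (by norm_num)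
  have z20 : J 2 0 = 0 := hJA.1 2 0 (by norm_num) (by norm_num)
  have z21 : J 2 1 = 0 := hJA.1 2 1 (by norm_num) (by norm_num)
  have z02 : J 0 2 = 0 := hJA.1 0 2 (by norm_num) (by norm_num)
  have t1 : J 0 0 + J 1 1 + J 2 2 = 3 * lam := by
    rw [← Matrix.trace_fin_three, trJ, trA]
  have t2 : J 0 0 ^ 2 + J 1 1 ^ 2 + J 2 2 ^ 2 = 3 * lam ^ 2 := by
    have h := trJ2
    rw [trA2, Matrix.trace_fin_three] at h
    simp only [Matrix.mul_apply, Fin.sum_univ_three, z10, z20, z21, z02, mul_zero, zero_mul,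
      add_zero, zero_add] at h
    linear_combination h
  have t3 : J 0 0 ^ 3 + J 1 1 ^ 3 + J 2 2 ^ 3 = 3 * lam ^ 3 := by
    have h := trJ3
    rw [trA3, Matrix.trace_fin_three] at h
    simp only [Matrix.mul_apply, Fin.sum_univ_three, z10, z20, z21, z02, mul_zero, zero_mul,
      add_zero, zero_add] at h
    linear_combination h
  have d0 : J 0 0 = lam := by
    have := cube_zero (J 0 0 - lam) (J 1 1 - lam) (J 2 2 - lam)
      (by linear_combination t1) (by linear_combination t2 - 2*lam*t1)
      (by linear_combination t3 - 3*lam*t2 + 3*lam^2*t1)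
    linear_combination this
  have d1 : J 1 1 = lam := by
    have := cube_zero (J 1 1 - lam) (J 0 0 - lam) (J 2 2 - lam)
      (by linear_combination t1) (by linear_combination t2 - 2*lam*t1)
      (by linear_combination t3 - 3*lam*t2 + 3*lam^2*t1)
    linear_combination this
  have d2 : J 2 2 = lam := by
    have := cube_zero (J 2 2 - lam) (J 1 1 - lam) (J 0 0 - lam)
      (by linear_combination t1) (by linear_combination t2 - 2*lam*t1)
      (by linear_combination t3 - 3*lam*t2 + 3*lam^2*t1)
    linear_combination this
  -- the conjugated nilpotent part
  set M := S⁻¹ * N * S with hM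
  have hJM : J = lam • (1 : Matrix (Fin 3) (Fin 3) ℂ) + M := by
    rw [hJ, hA, Matrix.mul_add, Matrix.add_mul, Matrix.mul_smul, Matrix.mul_one,
      Matrix.smul_mul, h2, hM]
  have hMe : ∀ i j : Fin 3, M i j = J i j - (if i = j then lam else 0) := by
    intro i j
    rw [hJM]
    simp [Matrix.add_apply, Matrix.smul_apply, Matrix.one_apply]
  have m00 : M 0 0 = 0 := by rw [hMe]; simp [d0]
  have m11 : M 1 1 = 0 := by rw [hMe]; simp [d1]
  have m22 : M 2 2 = 0 := by rw [hMe]; simp [d2]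
  have m02 : M 0 2 = 0 := by rw [hMe]; simp [z02]
  have m10 : M 1 0 = 0 := by rw [hMe]; simp [z10]
  have m20 : M 2 0 = 0 := by rw [hMe]; simp [z20]
  have m21 : M 2 1 = 0 := by rw [hMe]; simp [z21]
  -- K = mu • 1 + M * M
  have hMM : M * M = S⁻¹ * (N * N) * S := by
    rw [hM]
    rw [show S⁻¹ * N * S * (S⁻¹ * N * S) = S⁻¹ * N * (S * S⁻¹) * N * S by
      simp only [Matrix.mul_assoc], h1]
    simp only [Matrix.mul_assoc, Matrix.mul_one, Matrix.one_mul]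
  have hKM : K = mu • (1 : Matrix (Fin 3) (Fin 3) ℂ) + M * M := by
    rw [hK, hB, Matrix.mul_add, Matrix.add_mul, Matrix.mul_smul, Matrix.mul_one,
      Matrix.smul_mul, h2, hMM, pow_two]
  -- K 0 2 = 0 forces M 0 1 * M 1 2 = 0
  have k02 : K 0 2 = 0 := hJB.1 0 2 (by norm_num) (by norm_num)
  have hprod : M 0 1 * M 1 2 = 0 := by
    have h := k02
    rw [hKM] at h
    simpa [Matrix.add_apply, Matrix.smul_apply, Matrix.one_apply, Matrix.mul_apply,
      Fin.sum_univ_three, m00, m22, m02] using h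
  -- hence M * M = 0
  have hMM0 : M * M = 0 := by
    ext i j
    fin_cases i <;> fin_cases j <;>
      simp [Matrix.mul_apply, Fin.sum_univ_three, m00, m11, m22, m02, m10, m20, m21, hprod]
  -- so N * N = 0, contradiction
  have hNN : N * N = 0 := by
    have : S * (M * M) * S⁻¹ = 0 := by rw [hMM0]; simp
    rw [hMM] at this
    rw [show S * (S⁻¹ * (N * N) * S) * S⁻¹ = (S * S⁻¹) * (N * N) * (S * S⁻¹) by
      simp only [Matrix.mul_assoc], h1] at this
    simpa using this
  have : (N * N) 0 2 = (1 : ℂ) := by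
    simp [Matrix.mul_apply, Fin.sum_univ_three, hNe]
  rw [hNN] at this
  simp at this
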